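/- Let Λ ⊆ Z_{≥0}^k be a Young diagram with corner cell set containing only the cells d_1 e_1, …, d_k e_k ('rays' of lengths d_1 ≥ … ≥ d_k ≥ 2), and let b_1,…,b_k be nonzero scalars. In the algebra A = K[x_1,…,x_k]/(x_i x_j for i≠j; x_i^{d_i+1} for all i; b_j x_i^{d_i} − b_i x_j^{d_j} for all i,j), the socle is one-dimensional, spanned by x_1^{d_1}; i.e., A is Gorenstein. -/

import Mathlib

open MvPolynomial

set_option maxHeartbeats 1000000
set_option synthInstance.maxHeartbeats 400000

namespace RayGor
variable {K : Type*} [Field K] {k : ℕ} (d : Fin (k + 1) → ℕ) (b : Fin (k + 1) → K)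





noncomputable def phiTop (p : MvPolynomial (Fin (k + 1)) K) : K :=
  ∑ i, b i / b 0 * coeff (Finsupp.single i (d i)) p

def gens : Set (MvPolynomial (Fin (k + 1)) K) :=
  ({q | ∃ i j : Fin (k + 1), i ≠ j ∧ q = X i * X j} ∪
   {q | ∃ i : Fin (k + 1), q = X i ^ (d i + 1)} ∪
   {q | ∃ i j : Fin (k + 1), q = C (b j) * X i ^ d i - C (b i) * X j ^ d j})

def W : Set (MvPolynomial (Fin (k + 1)) K) :=
  {p | constantCoeff p = 0 ∧
       (∀ i m, 1 ≤ m → m < d i → coeff (Finsupp.single i m) p = 0) ∧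
       phiTop d b p = 0}

theorem phiTop_add (p q : MvPolynomial (Fin (k + 1)) K) :
    phiTop d b (p + q) = phiTop d b p + phiTop d b q := by
  simp [phiTop, coeff_add, mul_add, Finset.sum_add_distrib]

theorem phiTop_C_mul (a : K) (p : MvPolynomial (Fin (k + 1)) K) :
    phiTop d b (C a * p) = a * phiTop d b p := by
  simp only [phiTop, coeff_C_mul, Finset.mul_sum]
  exact Finset.sum_congr rfl fun i _ => by ring

theorem W_zero : (0 : MvPolynomial (Fin (k + 1)) K) ∈ W d b := by
  simp [W, phiTop]

theorem W_add {p q : MvPolynomial (Fin (k + 1)) K} (hp : p ∈ W d b) (hq : q ∈ W d b) :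
    p + q ∈ W d b := by
  obtain ⟨h1, h2, h3⟩ := hp
  obtain ⟨g1, g2, g3⟩ := hq
  refine ⟨by simp [h1, g1], fun i m hm hm' => by simp [coeff_add, h2 i m hm hm', g2 i m hm hm'],
    by rw [phiTop_add, h3, g3, add_zero]⟩

theorem W_C_mul (a : K) {p : MvPolynomial (Fin (k + 1)) K} (hp : p ∈ W d b) :
    C a * p ∈ W d b := by
  obtain ⟨h1, h2, h3⟩ := hp
  refine ⟨by simp [h1], fun i m hm hm' => by simp [coeff_C_mul, h2 i m hm hm'],
    by rw [phiTop_C_mul, h3, mul_zero]⟩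


theorem X_mul_X_eq (i j : Fin (k + 1)) :
    (X i * X j : MvPolynomial (Fin (k + 1)) K) =
      monomial (Finsupp.single i 1 + Finsupp.single j 1) 1 := by
  rw [← pow_one (X i), ← pow_one (X j), X_pow_eq_monomial, X_pow_eq_monomial, monomial_mul,
    one_mul]

theorem mixed_ne (i j l : Fin (k + 1)) (hij : i ≠ j) (m' : ℕ) :
    Finsupp.single i 1 + Finsupp.single j 1 ≠ Finsupp.single l m' := by
  intro h
  have hi := (DFunLike.congr_fun h i).symm
  have hj := (DFunLike.congr_fun h j).symm
  rw [Finsupp.add_apply, Finsupp.single_eq_same, Finsupp.single_eq_of_ne hij,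
    add_zero] at hi
  rw [Finsupp.add_apply, Finsupp.single_eq_same, Finsupp.single_eq_of_ne (Ne.symm hij), zero_add] at hj
  rw [Finsupp.single_apply] at hi hj
  have hli : l = i := by by_contra hc; rw [if_neg hc] at hi; omega
  have hlj : l = j := by by_contra hc; rw [if_neg hc] at hj; omega
  exact hij (hli.symm.trans hlj)

theorem coeff_single_X_mul_X (i j l : Fin (k + 1)) (hij : i ≠ j) (m' : ℕ) :
    coeff (Finsupp.single l m') (X i * X j : MvPolynomial (Fin (k + 1)) K) = 0 := by
  classical
  rw [X_mul_X_eq, coeff_monomial, if_neg (mixed_ne i j l hij m')]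

theorem coeff_single_pow (s : Fin (k + 1)) (n : ℕ) (l : Fin (k + 1)) (m' : ℕ) :
    coeff (Finsupp.single l m') (X s ^ n : MvPolynomial (Fin (k + 1)) K) =
      if s = l ∧ n = m' ∨ n = 0 ∧ m' = 0 then 1 else 0 := by
  classical
  rw [X_pow_eq_monomial, coeff_monomial]
  congr 1
  simp [Finsupp.single_eq_single_iff]

theorem constantCoeff_pow_X (s : Fin (k + 1)) (n : ℕ) :
    constantCoeff (X s ^ n : MvPolynomial (Fin (k + 1)) K) = if n = 0 then 1 else 0 := by
  classical
  rw [constantCoeff_eq]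
  have h := coeff_single_pow (K := K) s n s 0
  rw [Finsupp.single_zero] at h
  rw [show ((coeff 0) (X s ^ n : MvPolynomial (Fin (k + 1)) K)) = coeff 0 (X s ^ n) from rfl, h]
  by_cases hn : n = 0 <;> simp [hn]

theorem coeff_single_pow_d (hd : ∀ i, 2 ≤ d i) (i l : Fin (k + 1)) :
    coeff (Finsupp.single l (d l)) (X i ^ d i : MvPolynomial (Fin (k + 1)) K) =
      if i = l then 1 else 0 := by
  rw [coeff_single_pow]
  congr 1
  simp only [eq_iff_iff]
  constructor
  · rintro (⟨rfl, -⟩ | ⟨h1, -⟩)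
    · rfl
    · have := hd i; omega
  · rintro rfl
    exact Or.inl ⟨rfl, rfl⟩

theorem gens_subset_W (hd : ∀ i, 2 ≤ d i) : gens d b ⊆ W d b := by
  rintro q ((⟨i, j, hij, rfl⟩ | ⟨i, rfl⟩) | ⟨i, j, rfl⟩)
  · refine ⟨?_, fun l m hm hm' => coeff_single_X_mul_X i j l hij m, ?_⟩
    · have h := coeff_single_X_mul_X (K := K) i j i hij 0
      rw [Finsupp.single_zero] at h
      rw [constantCoeff_eq]
      exact h
    · refine Finset.sum_eq_zero fun l _ => ?_
      rw [coeff_single_X_mul_X i j l hij, mul_zero]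
  · refine ⟨?_, fun l m hm hm' => ?_, ?_⟩
    · rw [constantCoeff_pow_X, if_neg (by omega)]
    · rw [coeff_single_pow, if_neg]
      rintro (⟨rfl, h2⟩ | ⟨h1, -⟩) <;> omega
    · refine Finset.sum_eq_zero fun l _ => ?_
      rw [coeff_single_pow, if_neg, mul_zero]
      have := hd l
      rintro (⟨rfl, h2⟩ | ⟨h1, -⟩) <;> omega
  · refine ⟨?_, fun l m hm hm' => ?_, ?_⟩
    · have h2i := hd i; have h2j := hd j
      rw [map_sub, map_mul, map_mul, constantCoeff_C, constantCoeff_C,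
        constantCoeff_pow_X, constantCoeff_pow_X, if_neg (by omega), if_neg (by omega)]
      ring
    · rw [coeff_sub, coeff_C_mul, coeff_C_mul, coeff_single_pow, coeff_single_pow,
        if_neg, if_neg]
      · ring
      · have := hd j; rintro (⟨rfl, h2⟩ | ⟨h1, -⟩) <;> omega
      · have := hd i; rintro (⟨rfl, h2⟩ | ⟨h1, -⟩) <;> omega
    · have hterm : ∀ l : Fin (k + 1),
          b l / b 0 * coeff (Finsupp.single l (d l))
            (C (b j) * X i ^ d i - C (b i) * X j ^ d j) =
          (if i = l then b l / b 0 * b j else 0) - (if j = l then b l / b 0 * b i else 0) := by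
        intro l
        rw [coeff_sub, coeff_C_mul, coeff_C_mul, coeff_single_pow_d d hd,
          coeff_single_pow_d d hd]
        split_ifs <;> ring
      rw [phiTop, Finset.sum_congr rfl fun l _ => hterm l, Finset.sum_sub_distrib,
        Finset.sum_ite_eq Finset.univ i _, Finset.sum_ite_eq Finset.univ j _]
      simp only [Finset.mem_univ, if_pos]
      ring


theorem single_sub_one (i : Fin (k + 1)) (m : ℕ) :
    Finsupp.single i m - Finsupp.single i 1 = Finsupp.single i (m - 1) := by
  rw [← Finsupp.single_tsub]

theorem coeff_single_X_mul (t i : Fin (k + 1)) (m : ℕ) (p : MvPolynomial (Fin (k + 1)) K) :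
    coeff (Finsupp.single i m) (X t * p) =
      if t = i ∧ m ≠ 0 then coeff (Finsupp.single i (m - 1)) p else 0 := by
  classical
  rw [coeff_X_mul']
  by_cases h : t = i ∧ m ≠ 0
  · obtain ⟨rfl, hm⟩ := h
    rw [if_pos, if_pos ⟨rfl, hm⟩, single_sub_one]
    simp [Finsupp.mem_support_iff, Finsupp.single_apply, hm]
  · rw [if_neg, if_neg h]
    simp only [Finsupp.mem_support_iff, Finsupp.single_apply, ne_eq, not_not]
    by_cases ht : i = t
    · subst ht
      simp only [if_pos rfl]
      push_neg at h
      exact h rfl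
    · simp [Ne.symm ht, ht]

theorem coeff_zero_mem_W {p : MvPolynomial (Fin (k + 1)) K} (hp : p ∈ W d b)
    (i : Fin (k + 1)) (m : ℕ) (hm : m < d i) : coeff (Finsupp.single i m) p = 0 := by
  rcases Nat.eq_zero_or_pos m with rfl | hm1
  · rw [Finsupp.single_zero, ← constantCoeff_eq]; exact hp.1
  · exact hp.2.1 i m hm1 hm

theorem W_X_mul (hd : ∀ i, 2 ≤ d i) (t : Fin (k + 1)) {p : MvPolynomial (Fin (k + 1)) K}
    (hp : p ∈ W d b) : X t * p ∈ W d b := by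
  refine ⟨by simp, fun i m hm hm' => ?_, ?_⟩
  · rw [coeff_single_X_mul]
    split_ifs with h
    · obtain ⟨rfl, -⟩ := h
      exact coeff_zero_mem_W d b hp t (m - 1) (by omega)
    · rfl
  · have h2 : ∀ i : Fin (k + 1), b i / b 0 * coeff (Finsupp.single i (d i)) (X t * p) =
        if t = i then b i / b 0 * coeff (Finsupp.single i (d i - 1)) p else 0 := by
      intro i
      rw [coeff_single_X_mul]
      have : d i ≠ 0 := by have := hd i; omega
      split_ifs with h1 h2 <;> simp_all
    rw [phiTop, Finset.sum_congr rfl fun i _ => h2 i, Finset.sum_ite_eq Finset.univ t _]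
    simp only [Finset.mem_univ, if_pos]
    rw [hp.2.1 t (d t - 1) (by have := hd t; omega) (by have := hd t; omega), mul_zero]

theorem span_le_W (hd : ∀ i, 2 ≤ d i) {p : MvPolynomial (Fin (k + 1)) K}
    (hp : p ∈ Ideal.span (gens d b)) : p ∈ W d b := by
  refine Submodule.span_induction (p := fun x _ => x ∈ W d b)
    (fun x hx => gens_subset_W d b hd hx) (W_zero d b)
    (fun x y _ _ hx hy => W_add d b hx hy) (fun r x _ hx => ?_) hp
  show r * x ∈ W d b
  induction r using MvPolynomial.induction_on with
  | C a => exact W_C_mul d b a hx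
  | add r1 r2 h1 h2 => rw [add_mul]; exact W_add d b h1 h2
  | mul_X r i h => rw [mul_comm r (X i), mul_assoc]; exact W_X_mul d b hd i h

noncomputable def nf (p : MvPolynomial (Fin (k + 1)) K) : MvPolynomial (Fin (k + 1)) K :=
  C (constantCoeff p) +
    (∑ i, ∑ m ∈ Finset.Ico 1 (d i), C (coeff (Finsupp.single i m) p) * X i ^ m) +
    C (phiTop d b p) * X 0 ^ d 0

theorem nf_add (p q : MvPolynomial (Fin (k + 1)) K) :
    nf d b (p + q) = nf d b p + nf d b q := by
  simp only [nf, map_add, coeff_add, phiTop_add, add_mul, Finset.sum_add_distrib]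
  ring

theorem phiTop_monomial_single (hd : ∀ i, 2 ≤ d i) (i : Fin (k + 1)) (m : ℕ) (a : K)
    (hm : m ≠ 0) :
    phiTop d b (monomial (Finsupp.single i m) a) =
      if m = d i then b i / b 0 * a else 0 := by
  classical
  have hterm : ∀ l, b l / b 0 * coeff (Finsupp.single l (d l)) (monomial (Finsupp.single i m) a)
      = if i = l then (if m = d i then b i / b 0 * a else 0) else 0 := by
    intro l
    rw [coeff_monomial]
    by_cases h1 : i = l
    · subst h1
      rw [if_pos rfl]
      by_cases h2 : m = d i
      · rw [if_pos (by rw [h2]), if_pos h2]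
      · rw [if_neg, if_neg h2, mul_zero]
        intro hcon
        exact h2 (by simpa using DFunLike.congr_fun hcon i)
    · rw [if_neg, if_neg h1, mul_zero]
      intro hcon
      have := DFunLike.congr_fun hcon i
      rw [Finsupp.single_eq_same, Finsupp.single_eq_of_ne h1] at this
      exact hm this
  rw [phiTop, Finset.sum_congr rfl fun l _ => hterm l, Finset.sum_ite_eq Finset.univ i _]
  simp only [Finset.mem_univ, if_pos]

theorem lowsum_monomial_single (i : Fin (k + 1)) (m : ℕ) (a : K) (hm : 1 ≤ m) :
    (∑ l, ∑ m' ∈ Finset.Ico 1 (d l),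
        C (coeff (Finsupp.single l m') (monomial (Finsupp.single i m) a)) * X l ^ m')
      = if m < d i then C a * X i ^ m else 0 := by
  classical
  have hterm : ∀ l, (∑ m' ∈ Finset.Ico 1 (d l),
      C (coeff (Finsupp.single l m') (monomial (Finsupp.single i m) a)) * X l ^ m') =
      if i = l then (if m < d i then C a * X i ^ m else 0) else 0 := by
    intro l
    by_cases h1 : i = l
    · subst h1
      rw [if_pos rfl]
      have hinner : ∀ m' ∈ Finset.Ico 1 (d i),
          C (coeff (Finsupp.single i m') (monomial (Finsupp.single i m) a)) * X i ^ m' =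
          if m' = m then C a * X i ^ m' else 0 := by
        intro m' _
        rw [coeff_monomial]
        by_cases h2 : m' = m
        · subst h2; rw [if_pos rfl, if_pos rfl]
        · rw [if_neg, if_neg h2, map_zero, zero_mul]
          intro hcon
          exact h2 (by simpa using (DFunLike.congr_fun hcon i).symm)
      rw [Finset.sum_congr rfl hinner, Finset.sum_ite_eq' (Finset.Ico 1 (d i)) m
        (fun m' => C a * X i ^ m')]
      by_cases h3 : m < d i
      · rw [if_pos (Finset.mem_Ico.mpr ⟨hm, h3⟩), if_pos h3]
      · rw [if_neg (fun hc => h3 (Finset.mem_Ico.mp hc).2), if_neg h3]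
    · rw [if_neg h1]
      refine Finset.sum_eq_zero fun m' hm' => ?_
      rw [Finset.mem_Ico] at hm'
      rw [coeff_monomial, if_neg, map_zero, zero_mul]
      intro hcon
      have := DFunLike.congr_fun hcon i
      rw [Finsupp.single_eq_same, Finsupp.single_eq_of_ne h1] at this
      omega
  rw [Finset.sum_congr rfl fun l _ => hterm l, Finset.sum_ite_eq Finset.univ i _]
  simp only [Finset.mem_univ, if_pos]

theorem monomial_sub_nf (hd : ∀ i, 2 ≤ d i) (hb0 : b 0 ≠ 0) (u : Fin (k + 1) →₀ ℕ) (a : K) :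
    monomial u a - nf d b (monomial u a) ∈ Ideal.span (gens d b) := by
  classical
  by_cases hu0 : u = 0
  · subst hu0
    have hnf : nf d b (monomial 0 a) = monomial 0 a := by
      rw [nf, constantCoeff_monomial, if_pos rfl]
      have h1 : (∑ i, ∑ m ∈ Finset.Ico 1 (d i),
          C (coeff (Finsupp.single i m) (monomial (0 : Fin (k + 1) →₀ ℕ) a)) * X i ^ m) = 0 := by
        refine Finset.sum_eq_zero fun i _ => Finset.sum_eq_zero fun m hm => ?_
        rw [Finset.mem_Ico] at hm
        rw [coeff_monomial, if_neg, map_zero, zero_mul]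
        intro hcon
        have := DFunLike.congr_fun hcon i
        rw [Finsupp.single_eq_same] at this
        simp only [Finsupp.coe_zero, Pi.zero_apply] at this
        omega
      have h2 : phiTop d b (monomial (0 : Fin (k + 1) →₀ ℕ) a) = 0 := by
        refine Finset.sum_eq_zero fun i _ => ?_
        rw [coeff_monomial, if_neg, mul_zero]
        intro hcon
        have := DFunLike.congr_fun hcon i
        rw [Finsupp.single_eq_same] at this
        simp only [Finsupp.coe_zero, Pi.zero_apply] at this
        have := hd i
        omega
      rw [h1, h2]
      simp [monomial_zero']
    rw [hnf, sub_self]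
    exact zero_mem _
  by_cases hmix : ∃ i j : Fin (k + 1), i ≠ j ∧ u i ≠ 0 ∧ u j ≠ 0
  · obtain ⟨i, j, hij, hi, hj⟩ := hmix
    have hne : ∀ (l : Fin (k + 1)) (m' : ℕ), u ≠ Finsupp.single l m' := by
      intro l m' hcon
      have h1 := DFunLike.congr_fun hcon i
      have h2 := DFunLike.congr_fun hcon j
      rw [Finsupp.single_apply] at h1 h2
      have hli : l = i := by by_contra hc; rw [if_neg hc] at h1; exact hi h1
      have hlj : l = j := by by_contra hc; rw [if_neg hc] at h2; exact hj h2
      exact hij (hli.symm.trans hlj)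
    have hnf : nf d b (monomial u a) = 0 := by
      rw [nf, constantCoeff_monomial, if_neg hu0]
      have h1 : (∑ i', ∑ m ∈ Finset.Ico 1 (d i'),
          C (coeff (Finsupp.single i' m) (monomial u a)) * X i' ^ m) = 0 := by
        refine Finset.sum_eq_zero fun i' _ => Finset.sum_eq_zero fun m _ => ?_
        rw [coeff_monomial, if_neg (hne i' m), map_zero, zero_mul]
      have h2 : phiTop d b (monomial u a) = 0 := by
        refine Finset.sum_eq_zero fun i' _ => ?_
        rw [coeff_monomial, if_neg (hne i' (d i')), mul_zero]
      rw [h1, h2]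
      simp
    rw [hnf, sub_zero]
    have hkey : monomial u a =
        (X i * X j) * monomial (u - Finsupp.single i 1 - Finsupp.single j 1) a := by
      have huu : Finsupp.single i 1 + Finsupp.single j 1 +
          (u - Finsupp.single i 1 - Finsupp.single j 1) = u := by
        ext t
        rw [Finsupp.add_apply, Finsupp.add_apply, Finsupp.tsub_apply, Finsupp.tsub_apply,
          Finsupp.single_apply, Finsupp.single_apply]
        by_cases h1 : i = t
        · subst h1
          rw [if_pos rfl, if_neg (fun hc => hij hc.symm)]
          omega
        · rw [if_neg h1]
          by_cases h2 : j = t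
          · subst h2
            rw [if_pos rfl]
            omega
          · rw [if_neg h2]
            omega
      rw [X_mul_X_eq, monomial_mul, one_mul, huu]
    rw [hkey]
    exact Ideal.mul_mem_right _ _ (Ideal.subset_span
      (Set.mem_union_left _ (Set.mem_union_left _ ⟨i, j, hij, rfl⟩)))
  · push_neg at hmix
    obtain ⟨i, hi⟩ : ∃ i, u i ≠ 0 := by
      by_contra hc
      push_neg at hc
      exact hu0 (Finsupp.ext fun t => hc t)
    have hu : u = Finsupp.single i (u i) := by
      ext t
      rw [Finsupp.single_apply]
      by_cases h1 : i = t
      · subst h1; rw [if_pos rfl]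
      · rw [if_neg h1]
        exact hmix i t (fun hc => h1 hc) hi
    set m := u i with hmdef
    have hm : 1 ≤ m := Nat.one_le_iff_ne_zero.mpr hi
    rw [hu]
    rcases lt_trichotomy m (d i) with hlt | heq | hgt
    · have hnf : nf d b (monomial (Finsupp.single i m) a) = monomial (Finsupp.single i m) a := by
        rw [nf, constantCoeff_monomial, if_neg (by
          intro hcon
          have := DFunLike.congr_fun hcon.symm i
          rw [Finsupp.single_eq_same] at this
          simp only [Finsupp.coe_zero, Pi.zero_apply] at this
          omega),
          lowsum_monomial_single d i m a hm, if_pos hlt,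
          phiTop_monomial_single d b hd i m a (by omega), if_neg (by omega)]
        simp [C_mul_X_pow_eq_monomial]
      rw [hnf, sub_self]
      exact zero_mem _
    · have hnf : nf d b (monomial (Finsupp.single i m) a) =
          C (b i / b 0 * a) * X 0 ^ d 0 := by
        rw [nf, constantCoeff_monomial, if_neg (by
          intro hcon
          have := DFunLike.congr_fun hcon.symm i
          rw [Finsupp.single_eq_same] at this
          simp only [Finsupp.coe_zero, Pi.zero_apply] at this
          omega),
          lowsum_monomial_single d i m a hm, if_neg (by omega),
          phiTop_monomial_single d b hd i m a (by omega), if_pos heq]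
        simp
      rw [hnf]
      have hkey : monomial (Finsupp.single i m) a - C (b i / b 0 * a) * X 0 ^ d 0 =
          C (a / b 0) * (C (b 0) * X i ^ d i - C (b i) * X 0 ^ d 0) := by
        rw [heq, mul_sub, ← mul_assoc, ← mul_assoc, ← C_mul, ← C_mul,
          div_mul_cancel₀ a hb0, ← C_mul_X_pow_eq_monomial]
        congr 2
        field_simp
      rw [hkey]
      exact Ideal.mul_mem_left _ _ (Ideal.subset_span
        (Set.mem_union_right _ ⟨i, 0, rfl⟩))
    · have hnf : nf d b (monomial (Finsupp.single i m) a) = 0 := by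
        rw [nf, constantCoeff_monomial, if_neg (by
          intro hcon
          have := DFunLike.congr_fun hcon.symm i
          rw [Finsupp.single_eq_same] at this
          simp only [Finsupp.coe_zero, Pi.zero_apply] at this
          omega),
          lowsum_monomial_single d i m a hm, if_neg (by omega),
          phiTop_monomial_single d b hd i m a (by omega), if_neg (by omega)]
        simp
      rw [hnf, sub_zero]
      have hkey : monomial (Finsupp.single i m) a =
          X i ^ (d i + 1) * monomial (Finsupp.single i (m - (d i + 1))) a := by
        rw [X_pow_eq_monomial, monomial_mul, one_mul, ← Finsupp.single_add,
          show d i + 1 + (m - (d i + 1)) = m by omega]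
      rw [hkey]
      exact Ideal.mul_mem_right _ _ (Ideal.subset_span
        (Set.mem_union_left _ (Set.mem_union_right _ ⟨i, rfl⟩)))

theorem sub_nf_mem (hd : ∀ i, 2 ≤ d i) (hb0 : b 0 ≠ 0) (p : MvPolynomial (Fin (k + 1)) K) :
    p - nf d b p ∈ Ideal.span (gens d b) := by
  induction p using MvPolynomial.induction_on' with
  | monomial u a => exact monomial_sub_nf d b hd hb0 u a
  | add p q hp hq =>
    rw [nf_add]
    have : p + q - (nf d b p + nf d b q) = (p - nf d b p) + (q - nf d b q) := by ring
    rw [this]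
    exact add_mem hp hq

theorem W_le_span (hd : ∀ i, 2 ≤ d i) (hb0 : b 0 ≠ 0) {p : MvPolynomial (Fin (k + 1)) K}
    (hp : p ∈ W d b) : p ∈ Ideal.span (gens d b) := by
  have h := sub_nf_mem d b hd hb0 p
  have hnf : nf d b p = 0 := by
    rw [nf, hp.1, hp.2.2]
    have hs : (∑ i, ∑ m ∈ Finset.Ico 1 (d i), C (coeff (Finsupp.single i m) p) * X i ^ m)
        = (0 : MvPolynomial (Fin (k + 1)) K) := by
      refine Finset.sum_eq_zero fun i _ => Finset.sum_eq_zero fun m hm => ?_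
      rw [Finset.mem_Ico] at hm
      rw [hp.2.1 i m hm.1 hm.2, map_zero, zero_mul]
    rw [hs]
    simp
  rwa [hnf, sub_zero] at h

theorem mem_span_iff_W (hd : ∀ i, 2 ≤ d i) (hb0 : b 0 ≠ 0) (p : MvPolynomial (Fin (k + 1)) K) :
    p ∈ Ideal.span (gens d b) ↔ p ∈ W d b :=
  ⟨fun h => span_le_W d b hd h, fun h => W_le_span d b hd hb0 h⟩

section Quotient

theorem X_pow_mem (t : Fin (k + 1)) : X t ^ (d t + 1) ∈ Ideal.span (gens d b) :=
  Ideal.subset_span (Set.mem_union_left _ (Set.mem_union_right _ ⟨t, rfl⟩))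

theorem mk_X_nilpotent (t : Fin (k + 1)) :
    IsNilpotent (Ideal.Quotient.mk (Ideal.span (gens d b)) (X t)) :=
  ⟨d t + 1, by rw [← map_pow, Ideal.Quotient.eq_zero_iff_mem]; exact X_pow_mem d b t⟩

theorem mk_nilpotent {q : MvPolynomial (Fin (k + 1)) K} (hq : constantCoeff q = 0) :
    IsNilpotent (Ideal.Quotient.mk (Ideal.span (gens d b)) q) := by
  have main : ∀ q : MvPolynomial (Fin (k + 1)) K,
      IsNilpotent (Ideal.Quotient.mk (Ideal.span (gens d b)) (q - C (constantCoeff q))) := by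
    intro q
    induction q using MvPolynomial.induction_on with
    | C a => simp
    | add p r hp hr =>
      have : p + r - C (constantCoeff (p + r)) =
          (p - C (constantCoeff p)) + (r - C (constantCoeff r)) := by
        rw [map_add, map_add]; ring
      rw [this, map_add]
      exact (Commute.all _ _).isNilpotent_add hp hr
    | mul_X p i hp =>
      have : p * X i - C (constantCoeff (p * X i)) = p * X i := by
        rw [map_mul, constantCoeff_X, mul_zero, map_zero, sub_zero]
      rw [this, map_mul, mul_comm]
      exact (Commute.all _ _).isNilpotent_mul_right (mk_X_nilpotent d b i)
  have h := main q
  rw [hq] at h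
  simpa using h

theorem isUnit_mk {q : MvPolynomial (Fin (k + 1)) K} (hq : constantCoeff q ≠ 0) :
    IsUnit (Ideal.Quotient.mk (Ideal.span (gens d b)) q) := by
  have hsplit : q = C (constantCoeff q) + (q - C (constantCoeff q)) := by ring
  rw [hsplit, map_add]
  refine IsNilpotent.isUnit_add_left_of_commute ?_ ?_ (Commute.all _ _)
  · exact mk_nilpotent d b (by rw [map_sub, constantCoeff_C, sub_self])
  · exact hq.isUnit.map (((Ideal.Quotient.mk (Ideal.span (gens d b))).comp
      (C : K →+* MvPolynomial (Fin (k + 1)) K)))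

theorem span_ne_top (hd : ∀ i, 2 ≤ d i) : Ideal.span (gens d b) ≠ ⊤ := by
  rw [Ideal.ne_top_iff_one]
  intro h
  have h1 := (span_le_W d b hd h).1
  rw [map_one] at h1
  exact one_ne_zero h1

theorem quot_nontrivial (hd : ∀ i, 2 ≤ d i) :
    Nontrivial (MvPolynomial (Fin (k + 1)) K ⧸ Ideal.span (gens d b)) :=
  Ideal.Quotient.nontrivial_iff.mpr (span_ne_top d b hd)

theorem quot_isLocalRing (hd : ∀ i, 2 ≤ d i) :
    IsLocalRing (MvPolynomial (Fin (k + 1)) K ⧸ Ideal.span (gens d b)) := by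
  haveI := quot_nontrivial d b hd
  refine IsLocalRing.of_isUnit_or_isUnit_one_sub_self fun a => ?_
  obtain ⟨q, rfl⟩ := Ideal.Quotient.mk_surjective a
  by_cases hc : constantCoeff q = 0
  · right
    rw [← map_one (Ideal.Quotient.mk (Ideal.span (gens d b))), ← map_sub]
    exact isUnit_mk d b (by rw [map_sub, map_one, hc, sub_zero]; exact one_ne_zero)
  · exact Or.inl (isUnit_mk d b hc)

theorem mk_mem_maximalIdeal_iff (hd : ∀ i, 2 ≤ d i)
    (q : MvPolynomial (Fin (k + 1)) K) :
    letI := quot_isLocalRing d b hd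
    (Ideal.Quotient.mk (Ideal.span (gens d b)) q ∈
      IsLocalRing.maximalIdeal (MvPolynomial (Fin (k + 1)) K ⧸ Ideal.span (gens d b)))
      ↔ constantCoeff q = 0 := by
  letI := quot_isLocalRing d b hd
  haveI := quot_nontrivial d b hd
  rw [IsLocalRing.mem_maximalIdeal, mem_nonunits_iff]
  constructor
  · intro h
    by_contra hc
    exact h (isUnit_mk d b hc)
  · intro h hu
    exact hu.not_isNilpotent (mk_nilpotent d b h)

theorem phiTop_sub (p q : MvPolynomial (Fin (k + 1)) K) :
    phiTop d b (p - q) = phiTop d b p - phiTop d b q := by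
  simp [phiTop, coeff_sub, mul_sub, Finset.sum_sub_distrib]

theorem phiTop_top (hd : ∀ i, 2 ≤ d i) (hb0 : b 0 ≠ 0) :
    phiTop d b (X 0 ^ d 0 : MvPolynomial (Fin (k + 1)) K) = 1 := by
  have hterm : ∀ l, b l / b 0 *
      coeff (Finsupp.single l (d l)) (X 0 ^ d 0 : MvPolynomial (Fin (k + 1)) K) =
      if (0 : Fin (k + 1)) = l then 1 else 0 := by
    intro l
    rw [coeff_single_pow]
    by_cases h : (0 : Fin (k + 1)) = l
    · subst h
      rw [if_pos (Or.inl ⟨rfl, rfl⟩), if_pos rfl, mul_one, div_self hb0]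
    · rw [if_neg, if_neg h, mul_zero]
      rintro (⟨h0, -⟩ | ⟨h1, -⟩)
      · exact h h0
      · have := hd 0; omega
  rw [phiTop, Finset.sum_congr rfl fun l _ => hterm l, Finset.sum_ite_eq Finset.univ 0 _]
  simp only [Finset.mem_univ, if_pos]

theorem top_not_mem (hd : ∀ i, 2 ≤ d i) (hb0 : b 0 ≠ 0) :
    (X 0 ^ d 0 : MvPolynomial (Fin (k + 1)) K) ∉ Ideal.span (gens d b) := by
  intro h
  have := (span_le_W d b hd h).2.2
  rw [phiTop_top d b hd hb0] at this
  exact one_ne_zero this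

theorem top_mul_mem (hd : ∀ i, 2 ≤ d i) (hb0 : b 0 ≠ 0) {q : MvPolynomial (Fin (k + 1)) K}
    (hq : constantCoeff q = 0) :
    (X 0 ^ d 0 : MvPolynomial (Fin (k + 1)) K) * q ∈ Ideal.span (gens d b) := by
  classical
  have hd0 : d 0 ≠ 0 := by have := hd 0; omega
  have hq0 : coeff (0 : Fin (k + 1) →₀ ℕ) q = 0 := by rw [← constantCoeff_eq]; exact hq
  refine W_le_span d b hd hb0 ⟨?_, ?_, ?_⟩
  · rw [constantCoeff_eq]
    show coeff 0 (X 0 ^ d 0 * q) = 0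
    rw [X_pow_eq_monomial, coeff_monomial_mul', if_neg]
    rw [Finsupp.single_le_iff]
    simp only [Finsupp.coe_zero, Pi.zero_apply]
    omega
  · intro i m hm hm'
    rw [X_pow_eq_monomial, coeff_monomial_mul', if_neg]
    rw [Finsupp.single_le_iff, Finsupp.single_apply]
    by_cases h0 : i = (0 : Fin (k + 1))
    · subst h0
      rw [if_pos rfl]
      omega
    · rw [if_neg h0]
      omega
  · refine Finset.sum_eq_zero fun i _ => ?_
    rw [X_pow_eq_monomial, coeff_monomial_mul']
    by_cases h0 : (0 : Fin (k + 1)) = i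
    · subst h0
      rw [if_pos le_rfl, tsub_self, hq0]
      ring
    · rw [if_neg, mul_zero]
      rw [Finsupp.single_le_iff, Finsupp.single_apply, if_neg (fun hc => h0 hc.symm)]
      omega

theorem phiTop_X_mul (hd : ∀ i, 2 ≤ d i) (t : Fin (k + 1)) (p : MvPolynomial (Fin (k + 1)) K) :
    phiTop d b (X t * p) = b t / b 0 * coeff (Finsupp.single t (d t - 1)) p := by
  have h2 : ∀ i : Fin (k + 1), b i / b 0 * coeff (Finsupp.single i (d i)) (X t * p) =
      if t = i then b i / b 0 * coeff (Finsupp.single i (d i - 1)) p else 0 := by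
    intro i
    rw [coeff_single_X_mul]
    have : d i ≠ 0 := by have := hd i; omega
    split_ifs with h1 h2 <;> simp_all
  rw [phiTop, Finset.sum_congr rfl fun i _ => h2 i, Finset.sum_ite_eq Finset.univ t _]
  simp only [Finset.mem_univ, if_pos]

theorem socle_le (hd : ∀ i, 2 ≤ d i) (hb : ∀ i, b i ≠ 0) {p : MvPolynomial (Fin (k + 1)) K}
    (hmul : ∀ t, p * X t ∈ Ideal.span (gens d b)) :
    p - C (phiTop d b p) * X 0 ^ d 0 ∈ Ideal.span (gens d b) := by
  classical
  have hW : ∀ t, X t * p ∈ W d b := by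
    intro t
    refine span_le_W d b hd ?_
    rw [mul_comm]
    exact hmul t
  have hF0 : coeff (0 : Fin (k + 1) →₀ ℕ) p = 0 := by
    have h := (hW 0).2.1 0 1 le_rfl (by have := hd 0; omega)
    rw [coeff_single_X_mul, if_pos ⟨rfl, one_ne_zero⟩] at h
    simpa using h
  have htop : ∀ i, coeff (Finsupp.single i (d i - 1)) p = 0 := by
    intro i
    have h := (hW i).2.2
    rw [phiTop_X_mul d b hd i p] at h
    have hne : b i / b 0 ≠ 0 := div_ne_zero (hb i) (hb 0)
    exact (mul_eq_zero.mp h).resolve_left hne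
  have hcoeff : ∀ i m, m < d i → coeff (Finsupp.single i m) p = 0 := by
    intro i m hm
    by_cases h1 : m = d i - 1
    · rw [h1]; exact htop i
    · rcases Nat.eq_zero_or_pos m with rfl | hm0
      · rw [Finsupp.single_zero]; exact hF0
      · have h := (hW i).2.1 i (m + 1) (by omega) (by omega)
        rw [coeff_single_X_mul, if_pos ⟨rfl, by omega⟩] at h
        simpa using h
  refine W_le_span d b hd (hb 0) ⟨?_, ?_, ?_⟩
  · rw [map_sub, map_mul, constantCoeff_C, constantCoeff_pow_X,
      if_neg (by have := hd 0; omega), mul_zero, sub_zero, constantCoeff_eq]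
    exact hF0
  · intro i m hm hm'
    rw [coeff_sub, hcoeff i m hm', coeff_C_mul, coeff_single_pow, if_neg, mul_zero, sub_zero]
    rintro (⟨hi0, hdm⟩ | ⟨h1, -⟩)
    · subst hi0
      omega
    · have := hd 0; omega
  · rw [phiTop_sub, phiTop_C_mul, phiTop_top d b hd (hb 0), mul_one, sub_self]

end Quotient
end RayGor

/-- For the Young diagram made of rays of lengths `d_1 ≥ … ≥ d_k ≥ 2` and nonzero scalars
`b_1,…,b_k`, the algebra
`A = K[x_1,…,x_k]/(x_i x_j (i≠j), x_i^{d_i+1}, b_j x_i^{d_i} − b_i x_j^{d_j})` is local,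
and its socle (the annihilator of the maximal ideal) is one-dimensional, spanned by
`x_1^{d_1}`; i.e. `A` is Gorenstein. -/
theorem ray_algebra_gorenstein
    (K : Type*) [Field K] [CharZero K] (k : ℕ) (d : Fin (k + 1) → ℕ) (b : Fin (k + 1) → K)
    (hsort : ∀ i j : Fin (k + 1), i ≤ j → d j ≤ d i)
    (hd : ∀ i, 2 ≤ d i) (hb : ∀ i, b i ≠ 0)
    (I : Ideal (MvPolynomial (Fin (k + 1)) K))
    (hI : I = Ideal.span
      ({q | ∃ i j : Fin (k + 1), i ≠ j ∧ q = X i * X j} ∪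
       {q | ∃ i : Fin (k + 1), q = X i ^ (d i + 1)} ∪
       {q | ∃ i j : Fin (k + 1), q = C (b j) * X i ^ d i - C (b i) * X j ^ d j})) :
    ∃ hloc : IsLocalRing (MvPolynomial (Fin (k + 1)) K ⧸ I),
      letI := hloc
      (IsLocalRing.maximalIdeal (MvPolynomial (Fin (k + 1)) K ⧸ I)).annihilator.restrictScalars K
          = Submodule.span K {Ideal.Quotient.mk I (X 0 ^ d 0)} ∧
        Module.finrank K
          ((IsLocalRing.maximalIdeal
            (MvPolynomial (Fin (k + 1)) K ⧸ I)).annihilator.restrictScalars K) = 1 := by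
  have hI' : I = Ideal.span (RayGor.gens d b) := hI
  subst hI'
  letI hloc := RayGor.quot_isLocalRing d b hd
  have hsm : ∀ (s : K) (q : MvPolynomial (Fin (k + 1)) K),
      s • (Ideal.Quotient.mk (Ideal.span (RayGor.gens d b)) q) =
        Ideal.Quotient.mk (Ideal.span (RayGor.gens d b)) (C s * q) := by
    intro s q
    rw [← smul_eq_C_mul, ← Ideal.Quotient.mkₐ_eq_mk (R₁ := K), map_smul]
  have hmain : (IsLocalRing.maximalIdeal
      (MvPolynomial (Fin (k + 1)) K ⧸ Ideal.span (RayGor.gens d b))).annihilator.restrictScalars K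
      = Submodule.span K
        {Ideal.Quotient.mk (Ideal.span (RayGor.gens d b)) (X 0 ^ d 0)} := by
    apply le_antisymm
    · intro a ha
      rw [Submodule.restrictScalars_mem] at ha
      obtain ⟨p, rfl⟩ := Ideal.Quotient.mk_surjective a
      have hmul : ∀ t, p * X t ∈ Ideal.span (RayGor.gens d b) := by
        intro t
        have hXt : Ideal.Quotient.mk (Ideal.span (RayGor.gens d b)) (X t) ∈
            IsLocalRing.maximalIdeal
              (MvPolynomial (Fin (k + 1)) K ⧸ Ideal.span (RayGor.gens d b)) :=
          (RayGor.mk_mem_maximalIdeal_iff d b hd (X t)).mpr (by simp)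
        have h0 := Submodule.mem_annihilator.mp ha _ hXt
        rwa [smul_eq_mul, ← map_mul, Ideal.Quotient.eq_zero_iff_mem] at h0
      have hs := RayGor.socle_le d b hd hb hmul
      rw [Submodule.mem_span_singleton]
      refine ⟨RayGor.phiTop d b p, ?_⟩
      rw [hsm, ← sub_eq_zero, ← map_sub, Ideal.Quotient.eq_zero_iff_mem]
      have hneg := Submodule.neg_mem _ hs
      rwa [neg_sub] at hneg
    · rw [Submodule.span_le, Set.singleton_subset_iff, SetLike.mem_coe,
        Submodule.restrictScalars_mem, Submodule.mem_annihilator]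
      intro n hn
      obtain ⟨q, rfl⟩ := Ideal.Quotient.mk_surjective n
      have hq : constantCoeff q = 0 := (RayGor.mk_mem_maximalIdeal_iff d b hd q).mp hn
      rw [smul_eq_mul, ← map_mul, Ideal.Quotient.eq_zero_iff_mem]
      exact RayGor.top_mul_mem d b hd (hb 0) hq
  refine ⟨hloc, hmain, ?_⟩
  rw [hmain]
  have hv : Ideal.Quotient.mk (Ideal.span (RayGor.gens d b)) (X 0 ^ d 0) ≠ 0 := by
    rw [Ne, Ideal.Quotient.eq_zero_iff_mem]
    exact RayGor.top_not_mem d b hd (hb 0)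
  exact finrank_span_singleton hv
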